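/- arXiv:2301.03919 — 2 statements merged into one kernel-verified Lean document; each statement's English description precedes it below -/
import Mathlib

section
/- Let Q(z) = Σ_{k=1}^N (−c_k z^k/k + conj(c_k) z^{−k}/k) with c_N > 0 and let θ_k = (2k−1)π/N. For every δ ∈ (0, π/(2N)) there exist a_N(δ) > 0 and r₀ > 0 such that for all z with 0 < |z| ≤ r₀ and |arg(z) − θ_k| ≤ π/(2N) − δ, one has Re[Q(z)] ≤ −a_N(δ)/|z|^N. -/
open Complex

/-- Uniform decay of `Re Q` in a subsector around `θ_k = (2k−1)π/N`: with
`Q(z) = Σ_{k=1}^N (−c_k z^k/k + conj(c_k) z^{−k}/k)` and `c_N > 0` real, for every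
`δ ∈ (0, π/(2N))` there exist `a_N(δ) > 0` and `r₀ > 0` such that
`Re[Q(z)] ≤ −a_N(δ)/|z|^N` for `z = r e^{i(θ_k+φ)}` with `0 < r ≤ r₀` and
`|φ| ≤ π/(2N) − δ`. -/
theorem stmt_12 (N : ℕ) (hN : 1 ≤ N) (c : ℕ → ℂ)
    (hcNim : (c N).im = 0) (hcNre : 0 < (c N).re)
    (Q : ℂ → ℂ)
    (hQ : ∀ z : ℂ, z ≠ 0 → Q z =
      ∑ k ∈ Finset.Icc 1 N,
        (-(c k) * z ^ k / (k : ℂ) + starRingEnd ℂ (c k) * z ^ (-(k : ℤ)) / (k : ℂ)))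
    (k : ℕ) (hk1 : 1 ≤ k) (hkN : k ≤ N)
    (θ : ℝ) (hθ : θ = (2 * (k : ℝ) - 1) * Real.pi / N)
    (δ : ℝ) (hδ : δ ∈ Set.Ioo 0 (Real.pi / (2 * N))) :
    ∃ a r₀ : ℝ, 0 < a ∧ 0 < r₀ ∧ ∀ r φ : ℝ, 0 < r → r ≤ r₀ →
      |φ| ≤ Real.pi / (2 * N) - δ →
        (Q ((r : ℂ) * Complex.exp ((θ + φ) * Complex.I))).re ≤ -a / r ^ N := by
  obtain ⟨hδ0, hδlt⟩ := hδ
  have hNpos : (0:ℝ) < (N:ℝ) := by exact_mod_cast Nat.pos_of_ne_zero (by omega)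
  have hNδlt : (N:ℝ) * δ < Real.pi / 2 := by
    have h := mul_lt_mul_of_pos_left hδlt hNpos
    calc (N:ℝ) * δ < (N:ℝ) * (Real.pi / (2 * N)) := h
    _ = Real.pi / 2 := by field_simp
  have hsinpos : 0 < Real.sin ((N:ℝ) * δ) := by
    apply Real.sin_pos_of_pos_of_lt_pi (by positivity)
    linarith [Real.pi_pos]
  set C : ℝ := ∑ j ∈ Finset.Icc 1 N, ‖c j‖ with hCdef
  have hC0 : 0 ≤ C := Finset.sum_nonneg fun _ _ => norm_nonneg _
  set b : ℝ := (c N).re * Real.sin ((N:ℝ) * δ) / N with hbdef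
  have hbpos : 0 < b := by positivity
  clear_value C b
  have hC1 : (0:ℝ) < 6 * (C + 1) := by linarith
  refine ⟨b / 2, min 1 (b / (6 * (C + 1))), half_pos hbpos,
    lt_min one_pos (div_pos hbpos hC1), ?_⟩
  intro r φ hr hrle hφ
  have hr1 : r ≤ 1 := hrle.trans (min_le_left _ _)
  have hrb : r ≤ b / (6 * (C + 1)) := hrle.trans (min_le_right _ _)
  set ψ : ℝ := θ + φ with hψdef
  set z : ℂ := (r:ℂ) * Complex.exp ((ψ:ℂ) * Complex.I) with hzdef
  have hzeq : (r : ℂ) * Complex.exp ((↑θ + ↑φ) * Complex.I) = z := by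
    have harg : ((θ : ℂ) + (φ : ℂ)) * Complex.I = (ψ : ℂ) * Complex.I := by
      rw [hψdef]; push_cast; ring
    rw [hzdef, harg]
  have hz : z ≠ 0 := mul_ne_zero (by exact_mod_cast hr.ne') (Complex.exp_ne_zero _)
  set u : ℝ := (r ^ N)⁻¹ with hudef
  have hupos : 0 < u := by positivity
  clear_value ψ z u
  -- 1 ≤ u * r
  have hrN_le : r ^ N ≤ r := by
    simpa using pow_le_pow_of_le_one hr.le hr1 hN
  have h1ur : 1 ≤ u * r := by
    rw [hudef, inv_mul_eq_div, le_div_iff₀ (by positivity), one_mul]; exact hrN_le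
  -- abs of z
  have habsz : ‖z‖ = r := by
    rw [hzdef, norm_mul, Complex.norm_exp_ofReal_mul_I, mul_one, Complex.norm_real,
      Real.norm_eq_abs, abs_of_pos hr]
  -- z^N in polar form
  have hzpow : ∀ n : ℕ, z ^ n = ((r ^ n : ℝ) : ℂ) * Complex.exp ((((n:ℝ) * ψ : ℝ) : ℂ) * Complex.I) := by
    intro n
    have harg : (n : ℂ) * ((ψ : ℂ) * Complex.I) = (((n : ℝ) * ψ : ℝ) : ℂ) * Complex.I := by
      push_cast; ring
    rw [hzdef, mul_pow, ← Complex.exp_nat_mul, harg]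
    norm_cast
  -- the key main-term identity
  have hcN : starRingEnd ℂ (c N) = (((c N).re : ℝ) : ℂ) := by
    rw [Complex.conj_eq_iff_im.mpr hcNim]
    exact Complex.ext rfl (by simpa using hcNim)
  have hmain : (starRingEnd ℂ (c N) * z ^ (-(N : ℤ)) / (N : ℂ)).re
      = (c N).re * u / N * Real.cos ((N:ℝ) * ψ) := by
    have hzn : z ^ (-(N : ℤ)) = ((u : ℝ) : ℂ) * Complex.exp (((-( (N:ℝ) * ψ) : ℝ) : ℂ) * Complex.I) := by
      have harg : -((((N:ℝ) * ψ : ℝ) : ℂ) * Complex.I)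
          = (((-((N:ℝ) * ψ)) : ℝ) : ℂ) * Complex.I := by push_cast; ring
      rw [zpow_neg, zpow_natCast, hzpow N, mul_inv, ← Complex.exp_neg, harg, hudef]
      norm_cast
    rw [hzn, hcN]
    have : (((c N).re : ℝ) : ℂ) * (((u : ℝ) : ℂ) * Complex.exp (((-( (N:ℝ) * ψ) : ℝ) : ℂ) * Complex.I)) / (N : ℂ)
        = (((c N).re * u / N : ℝ) : ℂ) * Complex.exp (((-( (N:ℝ) * ψ) : ℝ) : ℂ) * Complex.I) := by
      push_cast
      ring
    rw [this, Complex.re_ofReal_mul, Complex.exp_ofReal_mul_I_re, Real.cos_neg]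
  -- cosine computation
  have hcosψ : Real.cos ((N:ℝ) * ψ) = - Real.cos ((N:ℝ) * φ) := by
    have hNθ : (N:ℝ) * θ = (2 * (k:ℝ) - 1) * Real.pi := by
      rw [hθ]; field_simp
    have hNψ : (N:ℝ) * ψ = ((N:ℝ) * φ + Real.pi) + ((k : ℤ) - 1 : ℤ) * (2 * Real.pi) := by
      rw [hψdef, mul_add, hNθ]
      push_cast
      ring
    rw [hNψ, Real.cos_add_int_mul_two_pi, Real.cos_add_pi]
  have hcosφ : Real.sin ((N:ℝ) * δ) ≤ Real.cos ((N:ℝ) * φ) := by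
    have habs : |(N:ℝ) * φ| ≤ Real.pi / 2 - (N:ℝ) * δ := by
      rw [abs_mul, abs_of_pos hNpos]
      calc (N:ℝ) * |φ| ≤ (N:ℝ) * (Real.pi / (2 * N) - δ) :=
        mul_le_mul_of_nonneg_left hφ hNpos.le
      _ = Real.pi / 2 - (N:ℝ) * δ := by field_simp
    calc Real.sin ((N:ℝ) * δ) = Real.cos (Real.pi / 2 - (N:ℝ) * δ) :=
          (Real.cos_pi_div_two_sub _).symm
    _ ≤ Real.cos |(N:ℝ) * φ| :=
          Real.cos_le_cos_of_nonneg_of_le_pi (abs_nonneg _) (by nlinarith [Real.pi_pos, mul_pos hNpos hδ0]) habs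
    _ = Real.cos ((N:ℝ) * φ) := Real.cos_abs _
  -- bound on the main term
  have hmain_le : (starRingEnd ℂ (c N) * z ^ (-(N : ℤ)) / (N : ℂ)).re ≤ -(b * u) := by
    rw [hmain, hcosψ]
    have h1 : (c N).re * u / N * Real.sin ((N:ℝ) * δ)
        ≤ (c N).re * u / N * Real.cos ((N:ℝ) * φ) := by
      apply mul_le_mul_of_nonneg_left hcosφ (by positivity)
    have h2 : (c N).re * u / N * Real.sin ((N:ℝ) * δ) = b * u := by
      rw [hbdef]; ring
    nlinarith
  -- bound on the other part of the N term
  have hcNC : ‖c N‖ ≤ C := by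
    rw [hCdef]
    exact Finset.single_le_sum (fun j _ => norm_nonneg (c j))
      (Finset.mem_Icc.mpr ⟨hN, le_refl N⟩)
  have hNterm1 : (-(c N) * z ^ N / (N : ℂ)).re ≤ C * (u * r) := by
    calc (-(c N) * z ^ N / (N : ℂ)).re ≤ ‖-(c N) * z ^ N / (N : ℂ)‖ :=
      Complex.re_le_norm _
    _ = ‖c N‖ * r ^ N / N := by
        rw [norm_div, norm_mul, norm_neg, norm_pow, habsz, Complex.norm_natCast]
    _ ≤ ‖c N‖ * 1 / 1 := by
        apply div_le_div₀ (by positivity) _ one_pos (by exact_mod_cast hN)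
        exact mul_le_mul_of_nonneg_left (by
          calc r ^ N ≤ r := hrN_le
          _ ≤ 1 := hr1) (norm_nonneg _)
    _ = ‖c N‖ := by ring
    _ ≤ C := hcNC
    _ = C * 1 := by ring
    _ ≤ C * (u * r) := mul_le_mul_of_nonneg_left h1ur hC0
  -- bound on lower-order terms
  have hlow : ∀ j ∈ Finset.Icc 1 N \ {N},
      (-(c j) * z ^ j / (j : ℂ) + starRingEnd ℂ (c j) * z ^ (-(j : ℤ)) / (j : ℂ)).re
        ≤ ‖c j‖ * (2 * (u * r)) := by
    intro j hj
    obtain ⟨hjmem, hjne⟩ := Finset.mem_sdiff.mp hj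
    obtain ⟨hj1, hjN⟩ := Finset.mem_Icc.mp hjmem
    have hjne' : j ≠ N := by simpa using hjne
    have hjlt : j + 1 ≤ N := by omega
    have hj0 : (0:ℝ) < (j:ℝ) := by exact_mod_cast Nat.pos_of_ne_zero (by omega)
    have hrj : r ^ j ≤ 1 := by
      calc r ^ j ≤ r ^ 1 := pow_le_pow_of_le_one hr.le hr1 hj1
      _ = r := pow_one r
      _ ≤ 1 := hr1
    have hrjinv : (r ^ j)⁻¹ ≤ u * r := by
      have hNj : r ^ N ≤ r * r ^ j := by
        calc r ^ N ≤ r ^ (j + 1) := pow_le_pow_of_le_one hr.le hr1 hjlt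
        _ = r * r ^ j := by ring
      rw [hudef, inv_mul_eq_div, inv_eq_one_div,
        div_le_div_iff₀ (by positivity) (by positivity), one_mul]
      exact hNj
    calc (-(c j) * z ^ j / (j : ℂ) + starRingEnd ℂ (c j) * z ^ (-(j : ℤ)) / (j : ℂ)).re
        ≤ ‖-(c j) * z ^ j / (j : ℂ) + starRingEnd ℂ (c j) * z ^ (-(j : ℤ)) / (j : ℂ)‖ :=
          Complex.re_le_norm _
    _ ≤ ‖-(c j) * z ^ j / (j : ℂ)‖ + ‖starRingEnd ℂ (c j) * z ^ (-(j : ℤ)) / (j : ℂ)‖ :=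
          norm_add_le _ _
    _ = ‖c j‖ * r ^ j / j + ‖c j‖ * (r ^ j)⁻¹ / j := by
          rw [norm_div, norm_mul, norm_neg, norm_pow, habsz, Complex.norm_natCast,
            norm_div, norm_mul, Complex.norm_conj, norm_zpow, habsz, Complex.norm_natCast,
            zpow_neg, zpow_natCast]
    _ ≤ ‖c j‖ * (u * r) / (j:ℝ) + ‖c j‖ * (u * r) / (j:ℝ) := by
          gcongr <;> first | exact hrj.trans h1ur | exact hrjinv | positivity
    _ ≤ ‖c j‖ * (u * r) + ‖c j‖ * (u * r) := by
          have h1j : (1:ℝ) ≤ (j:ℝ) := by exact_mod_cast hj1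
          have hnn : 0 ≤ ‖c j‖ * (u * r) := by positivity
          exact add_le_add (div_le_self hnn h1j) (div_le_self hnn h1j)
    _ = ‖c j‖ * (2 * (u * r)) := by ring
  -- assemble
  have hsplit := Finset.sum_eq_sum_sdiff_singleton_add
    (Finset.mem_Icc.mpr ⟨hN, le_refl N⟩)
    (fun j => (-(c j) * z ^ j / (j : ℂ) + starRingEnd ℂ (c j) * z ^ (-(j : ℤ)) / (j : ℂ)).re)
  have hQre : (Q z).re = (∑ j ∈ Finset.Icc 1 N \ {N},
      (-(c j) * z ^ j / (j : ℂ) + starRingEnd ℂ (c j) * z ^ (-(j : ℤ)) / (j : ℂ)).re)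
      + (-(c N) * z ^ N / (N : ℂ) + starRingEnd ℂ (c N) * z ^ (-(N : ℤ)) / (N : ℂ)).re := by
    rw [hQ z hz, Complex.re_sum, hsplit]
  rw [hzeq, hQre]
  have hsum_low : ∑ j ∈ Finset.Icc 1 N \ {N},
      (-(c j) * z ^ j / (j : ℂ) + starRingEnd ℂ (c j) * z ^ (-(j : ℤ)) / (j : ℂ)).re
        ≤ C * (2 * (u * r)) := by
    calc ∑ j ∈ Finset.Icc 1 N \ {N},
        (-(c j) * z ^ j / (j : ℂ) + starRingEnd ℂ (c j) * z ^ (-(j : ℤ)) / (j : ℂ)).re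
        ≤ ∑ j ∈ Finset.Icc 1 N \ {N}, ‖c j‖ * (2 * (u * r)) :=
          Finset.sum_le_sum hlow
    _ = (∑ j ∈ Finset.Icc 1 N \ {N}, ‖c j‖) * (2 * (u * r)) := by
          rw [Finset.sum_mul]
    _ ≤ C * (2 * (u * r)) := by
          apply mul_le_mul_of_nonneg_right _ (by positivity)
          rw [hCdef]
          exact Finset.sum_le_sum_of_subset_of_nonneg (Finset.sdiff_subset)
            (fun j _ _ => norm_nonneg _)
  have hNterm : (-(c N) * z ^ N / (N : ℂ) + starRingEnd ℂ (c N) * z ^ (-(N : ℤ)) / (N : ℂ)).re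
      ≤ C * (u * r) + -(b * u) := by
    rw [Complex.add_re]
    exact add_le_add hNterm1 hmain_le
  have hfinal : C * (2 * (u * r)) + (C * (u * r) + -(b * u)) ≤ -(b / 2) / r ^ N := by
    rw [le_div_iff₀ hC1] at hrb
    have h3r : 3 * C * r ≤ b / 2 := by linarith [mul_nonneg hC0 hr.le, hr.le]
    have hur : 3 * C * r * u ≤ b / 2 * u := mul_le_mul_of_nonneg_right h3r hupos.le
    have hrw : -(b / 2) / r ^ N = -(b / 2) * u := by rw [hudef, div_eq_mul_inv]
    rw [hrw]
    linarith [hur]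
  linarith [add_le_add hsum_low hNterm]
end

section
/- Let A be an N×N complex matrix with rows C₁ᵀ,…,C_Nᵀ such that C_{N−k} = −conj(C_k) for 1 ≤ k ≤ N−1 and α C_N is real-valued for some α ∈ ℂ with |α| = 1. If V ∈ ℂ^N satisfies AV = 0, then A·conj(V) = 0. Consequently, if the kernel of A is one-dimensional and V ≠ 0, there exists θ ∈ ℝ such that e^{iθ} V ∈ ℝ^N. -/
open Matrix

/-- Reality structure of the kernel of the Evans matrix: if the rows `C₁, …, C_{n+1}`
of `A` satisfy `C_{N−k} = −conj(C_k)` for `1 ≤ k ≤ N−1` (with `N = n+1`) and the last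
row is real after multiplication by a unimodular `α`, then `AV = 0` implies
`A conj(V) = 0`; consequently, if every kernel vector is a multiple of a fixed nonzero
kernel vector `V` (one-dimensional kernel), then `e^{iθ}V` is real for some `θ ∈ ℝ`. -/
theorem stmt_15 (n : ℕ) (A : Matrix (Fin (n + 1)) (Fin (n + 1)) ℂ)
    (hrows : ∀ i j : Fin (n + 1), (i : ℕ) + (j : ℕ) + 2 = n + 1 →
      ∀ l, A j l = -(starRingEnd ℂ (A i l)))
    (α : ℂ) (hα : ‖α‖ = 1)
    (hlast : ∀ l, (α * A (Fin.last n) l).im = 0)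
    (V : Fin (n + 1) → ℂ) (hV : A.mulVec V = 0) (hV0 : V ≠ 0)
    (hker : ∀ W : Fin (n + 1) → ℂ, A.mulVec W = 0 → ∃ c : ℂ, W = c • V) :
    A.mulVec (fun i => starRingEnd ℂ (V i)) = 0 ∧
    ∃ θ : ℝ, ∀ i, (Complex.exp ((θ : ℂ) * Complex.I) * V i).im = 0 := by
  have hVi : ∀ i, ∑ l, A i l * V l = 0 := by
    intro i
    have := congrFun hV i
    simpa [Matrix.mulVec, dotProduct] using this
  have hmain : A.mulVec (fun i => starRingEnd ℂ (V i)) = 0 := by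
    funext i
    simp only [Matrix.mulVec, dotProduct, Pi.zero_apply]
    rcases lt_or_eq_of_le (Fin.le_last i) with hi | hi
    · have hin : (i : ℕ) < n := hi
      set j : Fin (n + 1) := ⟨n - 1 - (i : ℕ), by omega⟩ with hj
      have hji : (j : ℕ) + (i : ℕ) + 2 = n + 1 := by simp [hj]; omega
      have hrow2 := hrows j i hji
      calc ∑ l, A i l * starRingEnd ℂ (V l)
          = ∑ l, -(starRingEnd ℂ (A j l * V l)) := by
            refine Finset.sum_congr rfl fun l _ => ?_
            rw [hrow2 l, _root_.map_mul]; ring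
        _ = -(starRingEnd ℂ (∑ l, A j l * V l)) := by
            rw [_root_.map_sum]
            exact Finset.sum_neg_distrib _
        _ = 0 := by rw [hVi j]; simp
    · have hαc : α * starRingEnd ℂ α = 1 := by
        rw [Complex.mul_conj]
        norm_cast
        rw [Complex.normSq_eq_norm_sq, hα]; norm_num
      have hA : ∀ l, A i l = (starRingEnd ℂ α) ^ 2 * starRingEnd ℂ (A i l) := by
        intro l
        have h1 : starRingEnd ℂ (α * A i l) = α * A i l := by
          rw [Complex.conj_eq_iff_im]
          rw [hi]; exact hlast l
        rw [_root_.map_mul] at h1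
        calc A i l = (starRingEnd ℂ α) * (α * A i l) := by
              rw [← mul_assoc, mul_comm (starRingEnd ℂ α) α, hαc, one_mul]
          _ = (starRingEnd ℂ α) ^ 2 * starRingEnd ℂ (A i l) := by
              rw [← h1]; ring
      calc ∑ l, A i l * starRingEnd ℂ (V l)
          = (starRingEnd ℂ α) ^ 2 * starRingEnd ℂ (∑ l, A i l * V l) := by
            rw [_root_.map_sum, Finset.mul_sum]
            refine Finset.sum_congr rfl fun l _ => ?_
            conv_lhs => rw [hA l]
            rw [_root_.map_mul]; ring
        _ = 0 := by rw [hVi i]; simp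
  refine ⟨hmain, ?_⟩
  obtain ⟨c, hc⟩ := hker _ hmain
  have hc' : ∀ i, starRingEnd ℂ (V i) = c * V i := fun i => congrFun hc i
  obtain ⟨i0, hi0'⟩ := Function.ne_iff.mp hV0
  have hi0 : V i0 ≠ 0 := by simpa using hi0'
  have hcc : starRingEnd ℂ c * c = 1 := by
    have h1 : V i0 = starRingEnd ℂ c * c * V i0 := by
      conv_lhs => rw [← Complex.conj_conj (V i0)]
      rw [hc' i0, _root_.map_mul, hc' i0]; ring
    have h2 : (starRingEnd ℂ c * c - 1) * V i0 = 0 := by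
      rw [sub_mul, one_mul, ← h1, sub_self]
    rcases mul_eq_zero.mp h2 with h | h
    · linear_combination h
    · exact absurd h hi0
  have habsc : ‖c‖ = 1 := by
    have : ‖starRingEnd ℂ c * c‖ = 1 := by rw [hcc]; simp
    rw [norm_mul, Complex.norm_conj] at this
    nlinarith [norm_nonneg c]
  refine ⟨Complex.arg c / 2, fun i => ?_⟩
  rw [← Complex.conj_eq_iff_im]
  set w := Complex.exp ((↑(Complex.arg c / 2) : ℂ) * Complex.I) with hw
  have hw2 : w * w = c := by
    rw [hw, ← Complex.exp_add]
    have : (↑(Complex.arg c / 2) : ℂ) * Complex.I + (↑(Complex.arg c / 2) : ℂ) * Complex.I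
        = (Complex.arg c : ℂ) * Complex.I := by
      push_cast; ring
    rw [this]
    conv_rhs => rw [← Complex.norm_mul_exp_arg_mul_I c]
    rw [habsc]; simp
  have hww : starRingEnd ℂ w * w = 1 := by
    rw [mul_comm, Complex.mul_conj]
    norm_cast
    rw [Complex.normSq_eq_norm_sq, hw, Complex.norm_exp_ofReal_mul_I]; norm_num
  rw [_root_.map_mul, hc' i, ← mul_assoc, ← hw2, ← mul_assoc, hww, one_mul]
end
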